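/- Let E be a finite-dimensional complex normed vector space with open unit ball B, and let ρ : B → B be a holomorphic map with ρ(0) = 0 and ρ ∘ ρ = ρ on B. Then the derivative ρ'(0) is a continuous linear projection (ρ'(0) ∘ ρ'(0) = ρ'(0)) of operator norm at most 1; and if ρ'(0) ≠ 0 then ‖ρ'(0)‖ = 1. -/

import Mathlib

/-- Let `E` be a finite-dimensional complex normed space with open unit
ball `B`, and `ρ : B → B` holomorphic with `ρ 0 = 0` and `ρ ∘ ρ = ρ` on `B`. Then
`ρ'(0)` is a continuous linear projection of operator norm at most `1`, and if
`ρ'(0) ≠ 0` then `‖ρ'(0)‖ = 1`. -/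
theorem stmt9
    {E : Type*} [NormedAddCommGroup E] [NormedSpace ℂ E] [FiniteDimensional ℂ E]
    (B : Set E) (hB : B = Metric.ball 0 1)
    (ρ : E → E) (hρ : AnalyticOnNhd ℂ ρ B) (hmaps : Set.MapsTo ρ B B)
    (hρ0 : ρ 0 = 0) (hidem : ∀ x ∈ B, ρ (ρ x) = ρ x) :
    (∀ v, fderiv ℂ ρ 0 (fderiv ℂ ρ 0 v) = fderiv ℂ ρ 0 v) ∧
      ‖fderiv ℂ ρ 0‖ ≤ 1 ∧ (fderiv ℂ ρ 0 ≠ 0 → ‖fderiv ℂ ρ 0‖ = 1) := by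
  have hBopen : IsOpen B := by rw [hB]; exact Metric.isOpen_ball
  have h0B : (0 : E) ∈ B := by rw [hB]; simp
  have hdiff0 : DifferentiableAt ℂ ρ 0 := (hρ 0 h0B).differentiableAt
  set P := fderiv ℂ ρ 0 with hP
  -- idempotency
  have hidem' : (fun x => ρ (ρ x)) =ᶠ[nhds (0 : E)] ρ :=
    Filter.eventuallyEq_of_mem (hBopen.mem_nhds h0B) hidem
  have hcomp : HasFDerivAt (fun x => ρ (ρ x)) (P.comp P) 0 := by
    have h1 : HasFDerivAt ρ P 0 := hdiff0.hasFDerivAt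
    have h2 : HasFDerivAt ρ P (ρ 0) := by rw [hρ0]; exact h1
    exact h2.comp 0 h1
  have hPP : P.comp P = P := by
    rw [← hcomp.fderiv, hidem'.fderiv_eq]
  -- norm bound
  have hnorm : ∀ v : E, ‖P v‖ ≤ ‖v‖ := by
    intro v
    rcases eq_or_ne v 0 with rfl | hv
    · simp
    have hv' : (0 : ℝ) < ‖v‖ := norm_pos_iff.mpr hv
    set f : ℂ → E := fun z => ρ (z • v) with hf
    have hsub : ∀ z : ℂ, z ∈ Metric.ball (0 : ℂ) (‖v‖⁻¹) → z • v ∈ B := by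
      intro z hz
      rw [hB, Metric.mem_ball, dist_zero_right, norm_smul]
      rw [Metric.mem_ball, dist_zero_right] at hz
      calc ‖z‖ * ‖v‖ < ‖v‖⁻¹ * ‖v‖ := by
            exact mul_lt_mul_of_pos_right hz hv'
        _ = 1 := inv_mul_cancel₀ hv'.ne'
    have hfd : DifferentiableOn ℂ f (Metric.ball 0 (‖v‖⁻¹)) := by
      intro z hz
      exact (((hρ _ (hsub z hz)).differentiableAt.comp z
        ((differentiableAt_id.smul_const v))).differentiableWithinAt)
    have hf0 : f 0 = 0 := by simp [hf, hρ0]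
    have hmaps' : Set.MapsTo f (Metric.ball 0 (‖v‖⁻¹)) (Metric.ball (f 0) 1) := by
      intro z hz
      rw [hf0]
      have := hmaps (hsub z hz)
      rwa [hB] at this
    have hder : HasDerivAt f (P v) 0 := by
      have h1 : HasDerivAt (fun z : ℂ => z • v) v 0 := by
        simpa using (hasDerivAt_id (0 : ℂ)).smul_const v
      have h2 : HasFDerivAt ρ P ((0 : ℂ) • v) := by
        simpa using hdiff0.hasFDerivAt
      exact h2.comp_hasDerivAt 0 h1
    have := Complex.norm_deriv_le_div_of_mapsTo_ball hfd (hmaps'.mono_right Metric.ball_subset_closedBall) (inv_pos.mpr hv')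
    rw [hder.deriv] at this
    calc ‖P v‖ ≤ 1 / ‖v‖⁻¹ := this
      _ = ‖v‖ := by rw [one_div, inv_inv]
  have hle : ‖P‖ ≤ 1 := P.opNorm_le_bound zero_le_one (by simpa using hnorm)
  refine ⟨fun v => by rw [← ContinuousLinearMap.comp_apply, hPP], hle, fun hne => ?_⟩
  have hpos : 0 < ‖P‖ := norm_pos_iff.mpr hne
  have h1 : ‖P‖ ≤ ‖P‖ * ‖P‖ := by
    calc ‖P‖ = ‖P.comp P‖ := by rw [hPP]
      _ ≤ ‖P‖ * ‖P‖ := P.opNorm_comp_le P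
  have : 1 ≤ ‖P‖ := by
    nlinarith
  linarith
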